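/- Let A, B, C₁, C₂ ∈ ℝ^{3×3} with B invertible, let p, p_d : ℝ → ℝ³ be twice differentiable, v, w, ũ : ℝ → ℝ³, and let ψ(t) denote the third component of p(t). Suppose the system satisfies ṗ(t) = J(ψ(t)) v(t) and v̇(t) = −A v(t) + B ũ(t) + w(t) for all t, where J(ψ) = [[cos ψ, −sin ψ, 0], [sin ψ, cos ψ, 0], [0, 0, 1]]. Define e₁ := p − p_d, e₂ := ṗ + C₁ e₁ − ṗ_d, and suppose the control input is chosen as ũ(t) = −B⁻¹ J(ψ(t))⁻¹ [ C₂ e₂(t) + e₁(t) − C₁² e₁(t) + C₁ e₂(t) + ( v₃(t) · S₀ J(ψ(t)) − J(ψ(t)) A ) v(t) − p̈_d(t) + J(ψ(t)) w(t) ], where v₃ is the third component of v and S₀ = [[0, −1, 0], [1, 0, 0], [0, 0, 0]]. Then e₂ is differentiable and ė₂(t) = −C₂ e₂(t) − e₁(t) for all t. -/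

import Mathlib

open Matrix

/-- The transformation matrix from hull-fixed to earth-fixed coordinates. -/
noncomputable def Jmat (ψ : ℝ) : Matrix (Fin 3) (Fin 3) ℝ :=
  !![Real.cos ψ, -Real.sin ψ, 0;
     Real.sin ψ,  Real.cos ψ, 0;
     0,           0,          1]

/-- The matrix `S₀` with `dJ/dψ = S₀ J(ψ)`. -/
def S₀ : Matrix (Fin 3) (Fin 3) ℝ :=
  !![0, -1, 0;
     1,  0, 0;
     0,  0, 0]


private lemma hasDerivAt_mulVec' (M : Matrix (Fin 3) (Fin 3) ℝ) {f : ℝ → Fin 3 → ℝ}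
    {f' : Fin 3 → ℝ} {t : ℝ} (hf : HasDerivAt f f' t) :
    HasDerivAt (fun s => M.mulVec (f s)) (M.mulVec f') t := by
  rw [hasDerivAt_pi] at hf ⊢
  intro i
  simp only [Matrix.mulVec, dotProduct]
  exact HasDerivAt.fun_sum fun j _ => (hf j).const_mul _

private lemma Jmat_det (ψ : ℝ) : (Jmat ψ).det = 1 := by
  simp [Jmat, Matrix.det_fin_three]
  ring_nf
  rw [add_comm]
  exact Real.sin_sq_add_cos_sq ψ

private lemma Jmat_mulVec_inv (ψ : ℝ) (x : Fin 3 → ℝ) :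
    (Jmat ψ).mulVec ((Jmat ψ)⁻¹.mulVec x) = x := by
  rw [Matrix.mulVec_mulVec, Matrix.mul_nonsing_inv _ (by simp [Jmat_det ψ]), Matrix.one_mulVec]

set_option linter.unnecessarySeqFocus false in
set_option linter.unusedTactic false in
private lemma hasDerivAt_Jmat_mulVec {ψ : ℝ → ℝ} {v : ℝ → Fin 3 → ℝ} {ψ' : ℝ}
    {v' : Fin 3 → ℝ} {t : ℝ} (hψ : HasDerivAt ψ ψ' t) (hv : HasDerivAt v v' t) :
    HasDerivAt (fun s => (Jmat (ψ s)).mulVec (v s))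
      (ψ' • (S₀ * Jmat (ψ t)).mulVec (v t) + (Jmat (ψ t)).mulVec v') t := by
  rw [hasDerivAt_pi] at hv ⊢
  intro i
  fin_cases i <;>
    simp [Jmat, S₀, Matrix.mulVec, dotProduct, Matrix.mul_apply, Fin.sum_univ_three]
  · have h := ((hψ.cos.fun_mul (hv 0)).fun_add ((hψ.sin.fun_neg).fun_mul (hv 1)))
    convert h using 1 <;> (try funext x) <;> ring
  · have h := ((hψ.sin.fun_mul (hv 0)).fun_add (hψ.cos.fun_mul (hv 1)))
    convert h using 1 <;> (try funext x) <;> ring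
  · exact hv 2


/-- Backstepping verification step: for the ship dynamics `ṗ = J(ψ)v`,
`v̇ = −Av + Bũ + w` (with `ψ` the third component of `p`), under the stated backstepping
feedback law for `ũ`, the second error variable `e₂ := ṗ + C₁ e₁ − ṗ_d` (with
`e₁ := p − p_d`) is differentiable and satisfies `ė₂ = −C₂ e₂ − e₁`. -/
theorem backstepping_second_error_dynamics
    (A B C₁ C₂ : Matrix (Fin 3) (Fin 3) ℝ) (hB : IsUnit B)
    (p pd v w u : ℝ → Fin 3 → ℝ)
    (hp : Differentiable ℝ p) (hp' : Differentiable ℝ (deriv p))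
    (hpd : Differentiable ℝ pd) (hpd' : Differentiable ℝ (deriv pd))
    (hkin : ∀ t : ℝ, deriv p t = (Jmat (p t 2)).mulVec (v t))
    (hdyn : ∀ t : ℝ, HasDerivAt v (-A.mulVec (v t) + B.mulVec (u t) + w t) t)
    (hu : ∀ t : ℝ, u t =
      -(B⁻¹).mulVec ((Jmat (p t 2))⁻¹.mulVec
        (C₂.mulVec (deriv p t + C₁.mulVec (p t - pd t) - deriv pd t)
          + (p t - pd t)
          - (C₁ * C₁).mulVec (p t - pd t)
          + C₁.mulVec (deriv p t + C₁.mulVec (p t - pd t) - deriv pd t)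
          + ((v t 2) • (S₀ * Jmat (p t 2)) - Jmat (p t 2) * A).mulVec (v t)
          - deriv (deriv pd) t
          + (Jmat (p t 2)).mulVec (w t)))) :
    let e₁ : ℝ → Fin 3 → ℝ := fun t => p t - pd t
    let e₂ : ℝ → Fin 3 → ℝ := fun t => deriv p t + C₁.mulVec (e₁ t) - deriv pd t
    Differentiable ℝ e₂ ∧ ∀ t : ℝ, deriv e₂ t = -C₂.mulVec (e₂ t) - e₁ t := by
  intro e₁ e₂
  have hBinv : ∀ x : Fin 3 → ℝ, B.mulVec ((B⁻¹).mulVec x) = x := by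
    intro x
    rw [Matrix.mulVec_mulVec,
      Matrix.mul_nonsing_inv _ ((Matrix.isUnit_iff_isUnit_det B).mp hB), Matrix.one_mulVec]
  have hψ : ∀ t : ℝ, HasDerivAt (fun s => p s 2) (v t 2) t := by
    intro t
    have h := hasDerivAt_pi.mp (hp t).hasDerivAt 2
    have h2 : deriv p t 2 = v t 2 := by
      rw [hkin t]
      simp [Jmat, Matrix.mulVec, dotProduct, Fin.sum_univ_three]
    rwa [h2] at h
  have hfun : deriv p = fun s => (Jmat (p s 2)).mulVec (v s) := funext hkin
  have hP'' : ∀ t : ℝ, HasDerivAt (deriv p)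
      ((v t 2) • (S₀ * Jmat (p t 2)).mulVec (v t)
        + (Jmat (p t 2)).mulVec (-A.mulVec (v t) + B.mulVec (u t) + w t)) t := by
    intro t
    rw [hfun]
    exact hasDerivAt_Jmat_mulVec (hψ t) (hdyn t)
  have he₂ : ∀ t : ℝ, HasDerivAt e₂
      ((v t 2) • (S₀ * Jmat (p t 2)).mulVec (v t)
        + (Jmat (p t 2)).mulVec (-A.mulVec (v t) + B.mulVec (u t) + w t)
        + C₁.mulVec (deriv p t - deriv pd t) - deriv (deriv pd) t) t := by
    intro t
    exact ((hP'' t).add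
      (hasDerivAt_mulVec' C₁ (((hp t).hasDerivAt.sub (hpd t).hasDerivAt)))).sub
      (hpd' t).hasDerivAt
  constructor
  · exact fun t => (he₂ t).differentiableAt
  · intro t
    rw [(he₂ t).deriv]
    show _ = -C₂.mulVec (deriv p t + C₁.mulVec (p t - pd t) - deriv pd t) - (p t - pd t)
    rw [hu t]
    simp only [Matrix.mulVec_neg, hBinv, Jmat_mulVec_inv, Matrix.mulVec_add,
      Matrix.mulVec_sub, Matrix.sub_mulVec, Matrix.smul_mulVec,
      ← Matrix.mulVec_mulVec]
    abel
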